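/- Let α ∈ (0,1), let g : ℝ^d → ℝ^d satisfy a global Lipschitz condition with constant L > 0, let τ ≥ 0, and let f : ℝ₊ → ℝ^d be continuous with x_f the unique continuous global solution of x_f(t) = f(t) + (1/Γ(α)) ∫₀ᵗ (t−s)^{α−1} g(x_f(s)) ds. Define (T_τ f)(θ) = f(τ + θ) + (1/Γ(α)) ∫₀^τ (τ + θ − s)^{α−1} g(x_f(s)) ds. Then the function ψ(t) := x_f(t + τ) is the unique continuous solution of the singular Volterra integral equation with forcing term T_τ f, i.e. ψ(t) = (T_τ f)(t) + (1/Γ(α)) ∫₀ᵗ (t−s)^{α−1} g(ψ(s)) ds for all t ≥ 0; equivalently x_{T_τ f}(t) = x_f(t + τ) for all t ≥ 0. -/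

import Mathlib

open Real MeasureTheory Set intervalIntegral

lemma ker_int {α : ℝ} (hα : -1 < α - 1) (t a b : ℝ) :
    IntervalIntegrable (fun s => (t - s) ^ (α - 1)) volume a b := by
  have := (intervalIntegrable_rpow' hα (a := t - a) (b := t - b)).comp_sub_left t
  simpa using this

lemma smul_int {E : Type*} [NormedAddCommGroup E] [NormedSpace ℝ E]
    [SecondCountableTopology E] {f : ℝ → ℝ} {u : ℝ → E} {a b : ℝ} (hab : a ≤ b)
    (hf : IntervalIntegrable f volume a b) (hu : ContinuousOn u (Icc a b)) :
    IntervalIntegrable (fun s => f s • u s) volume a b := by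
  rw [intervalIntegrable_iff_integrableOn_Icc_of_le hab] at hf ⊢
  exact hf.smul_continuousOn hu isCompact_Icc

lemma mul_int {f u : ℝ → ℝ} {a b : ℝ} (hab : a ≤ b)
    (hf : IntervalIntegrable f volume a b) (hu : ContinuousOn u (Icc a b)) :
    IntervalIntegrable (fun s => f s * u s) volume a b := smul_int hab hf hu

lemma ker_eval {α : ℝ} (hα : 0 < α) {a t : ℝ} :
    ∫ s in a..t, (t - s) ^ (α - 1) = (t - a) ^ α / α := by
  rw [intervalIntegral.integral_comp_sub_left (fun s => s ^ (α - 1)) t, sub_self,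
    integral_rpow (Or.inl (by linarith))]
  rw [Real.zero_rpow (by linarith : α - 1 + 1 ≠ 0)]
  ring_nf

/-- Singular Gronwall: a nonnegative continuous function satisfying the homogeneous
singular Volterra inequality is zero. -/
lemma gronwall {α C : ℝ} (hα : 0 < α) (hα1 : α < 1) (hC : 0 < C)
    {z : ℝ → ℝ} (hz : ContinuousOn z (Ici 0)) (hz0 : ∀ s, 0 ≤ z s)
    (hineq : ∀ t, 0 ≤ t → z t ≤ C * ∫ s in (0:ℝ)..t, (t - s) ^ (α - 1) * z s) :
    ∀ t, 0 ≤ t → z t = 0 := by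
  set h : ℝ := (α / (2 * C)) ^ (1 / α) with hh
  have hhpos : 0 < h := Real.rpow_pos_of_pos (by positivity) _
  have hhα : h ^ α = α / (2 * C) := by
    rw [hh, ← Real.rpow_mul (by positivity), one_div_mul_cancel hα.ne', Real.rpow_one]
  have main : ∀ n : ℕ, ∀ s ∈ Icc (0:ℝ) (n * h), z s = 0 := by
    intro n
    induction n with
    | zero =>
      intro s hs
      have hs0 : s = 0 := le_antisymm (by simpa using hs.2) hs.1
      subst hs0
      have h0 := hineq 0 le_rfl
      simp at h0
      exact le_antisymm h0 (hz0 0)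
    | succ n ih =>
      have ha0 : (0:ℝ) ≤ n * h := by positivity
      set a : ℝ := n * h with hadef
      set b : ℝ := a + h with hbdef
      have hab : a ≤ b := by linarith
      have hb0 : (0:ℝ) ≤ b := by linarith
      have hcast : ((n+1 : ℕ) : ℝ) * h = b := by push_cast [hbdef, hadef]; ring
      have key : ∀ s ∈ Icc (0:ℝ) b, z s = 0 := by
        obtain ⟨t₀, ht₀, hmax⟩ := isCompact_Icc.exists_isMaxOn (nonempty_Icc.mpr hb0)
          (hz.mono Icc_subset_Ici_self)
        have hM0 : 0 ≤ z t₀ := hz0 t₀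
        suffices hM : z t₀ = 0 by
          intro s hs
          exact le_antisymm (hM ▸ hmax hs) (hz0 s)
        by_cases hcase : t₀ ≤ a
        · exact ih t₀ ⟨ht₀.1, hcase⟩
        push_neg at hcase
        have ht0a : a ≤ t₀ := hcase.le
        have ht00 : (0:ℝ) ≤ t₀ := ht₀.1
        have hm1 : -1 < α - 1 := by linarith
        have hint1 : IntervalIntegrable (fun s => (t₀ - s)^(α-1) * z s) volume 0 a :=
          mul_int ha0 (ker_int hm1 _ _ _) (hz.mono Icc_subset_Ici_self)
        have hint2 : IntervalIntegrable (fun s => (t₀ - s)^(α-1) * z s) volume a t₀ :=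
          mul_int ht0a (ker_int hm1 _ _ _) (hz.mono (fun x hx => le_trans ha0 hx.1))
        have hsplit : ∫ s in (0:ℝ)..t₀, (t₀ - s)^(α-1) * z s
            = (∫ s in (0:ℝ)..a, (t₀ - s)^(α-1) * z s) + ∫ s in a..t₀, (t₀ - s)^(α-1) * z s :=
          (integral_add_adjacent_intervals hint1 hint2).symm
        have hzero : (∫ s in (0:ℝ)..a, (t₀ - s)^(α-1) * z s) = 0 := by
          rw [show (∫ s in (0:ℝ)..a, (t₀ - s)^(α-1) * z s)
              = ∫ s in (0:ℝ)..a, (0:ℝ) from intervalIntegral.integral_congr ?_]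
          · simp
          · intro s hs
            rw [uIcc_of_le ha0] at hs
            simp [ih s hs]
        have hbound : (∫ s in a..t₀, (t₀ - s)^(α-1) * z s)
            ≤ ∫ s in a..t₀, (t₀ - s)^(α-1) * z t₀ := by
          refine intervalIntegral.integral_mono_on ht0a hint2
            (mul_int ht0a (ker_int hm1 _ _ _) continuousOn_const) ?_
          intro s hs
          exact mul_le_mul_of_nonneg_left (hmax ⟨le_trans ha0 hs.1, le_trans hs.2 ht₀.2⟩)
            (Real.rpow_nonneg (by linarith [hs.2]) _)
        have heval : (∫ s in a..t₀, (t₀ - s)^(α-1) * z t₀) = z t₀ * ((t₀ - a)^α / α) := by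
          rw [intervalIntegral.integral_mul_const, ker_eval hα]; ring
        have hfin : (t₀ - a)^α ≤ h ^ α :=
          Real.rpow_le_rpow (by linarith) (by linarith [ht₀.2]) hα.le
        have hchain : z t₀ ≤ z t₀ / 2 := by
          have h1 := hineq t₀ ht00
          rw [hsplit, hzero, zero_add, ] at h1
          have h2 : z t₀ ≤ C * (z t₀ * ((t₀ - a)^α / α)) := by
            calc z t₀ ≤ C * ∫ s in a..t₀, (t₀ - s)^(α-1) * z s := h1
            _ ≤ C * (z t₀ * ((t₀ - a)^α / α)) := by
                rw [← heval]; exact mul_le_mul_of_nonneg_left hbound hC.le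
          have h3 : C * (z t₀ * ((t₀ - a)^α / α)) ≤ C * (z t₀ * (h^α / α)) := by
            gcongr
          rw [hhα] at h3
          have h4 : C * (z t₀ * (α / (2*C) / α)) = z t₀ / 2 := by
            field_simp
          linarith
        linarith
      intro s hs
      rw [hcast] at hs
      exact key s hs
  intro t ht
  obtain ⟨n, hn⟩ := exists_nat_ge (t / h)
  have : t ≤ n * h := by
    rw [div_le_iff₀ hhpos] at hn
    linarith
  exact main n t ⟨ht, this⟩

/-- The operator `(T_τ f)(θ) = f(τ+θ) + (1/Γ(α)) ∫₀^τ (τ+θ−s)^{α−1} g(x_f(s)) ds`,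
with `x_f` the solution for the forcing term `f`. -/
noncomputable def semigroupOp {d : ℕ} (α : ℝ)
    (g : EuclideanSpace ℝ (Fin d) → EuclideanSpace ℝ (Fin d))
    (xf : ℝ → EuclideanSpace ℝ (Fin d))
    (τ : ℝ) (f : ℝ → EuclideanSpace ℝ (Fin d)) :
    ℝ → EuclideanSpace ℝ (Fin d) :=
  fun θ => f (τ + θ) + (1 / Real.Gamma α) •
    ∫ s in (0:ℝ)..τ, ((τ + θ - s) ^ (α - 1)) • g (xf s)

theorem stmt11 {d : ℕ} (α : ℝ) (hα : α ∈ Set.Ioo (0:ℝ) 1)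
    (g : EuclideanSpace ℝ (Fin d) → EuclideanSpace ℝ (Fin d))
    (L : ℝ) (hL : 0 < L)
    (hg : ∀ x y : EuclideanSpace ℝ (Fin d), ‖g x - g y‖ ≤ L * ‖x - y‖)
    (τ : ℝ) (hτ : 0 ≤ τ)
    (f : ℝ → EuclideanSpace ℝ (Fin d)) (hf : ContinuousOn f (Set.Ici 0))
    (xf : ℝ → EuclideanSpace ℝ (Fin d)) (hxf : ContinuousOn xf (Set.Ici 0))
    (hxfeq : ∀ t : ℝ, 0 ≤ t →
      xf t = f t + (1 / Real.Gamma α) •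
        ∫ s in (0:ℝ)..t, ((t - s) ^ (α - 1)) • g (xf s)) :
    (ContinuousOn (fun t => xf (t + τ)) (Set.Ici 0) ∧
      ∀ t : ℝ, 0 ≤ t →
        xf (t + τ) = semigroupOp α g xf τ f t + (1 / Real.Gamma α) •
          ∫ s in (0:ℝ)..t, ((t - s) ^ (α - 1)) • g (xf (s + τ))) ∧
    (∀ y : ℝ → EuclideanSpace ℝ (Fin d), ContinuousOn y (Set.Ici 0) →
      (∀ t : ℝ, 0 ≤ t →
        y t = semigroupOp α g xf τ f t + (1 / Real.Gamma α) •
          ∫ s in (0:ℝ)..t, ((t - s) ^ (α - 1)) • g (y s)) →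
      ∀ t : ℝ, 0 ≤ t → y t = xf (t + τ)) := by
  obtain ⟨hα0, hα1⟩ := hα
  have hm1 : -1 < α - 1 := by linarith
  have hΓ : 0 < Real.Gamma α := Real.Gamma_pos_of_pos hα0
  have hgc : Continuous g := by
    have hlip : LipschitzWith L.toNNReal g := by
      apply LipschitzWith.of_dist_le_mul
      intro x y
      rw [dist_eq_norm, dist_eq_norm]
      simpa [Real.coe_toNNReal L hL.le] using hg x y
    exact hlip.continuous
  have hψc : ContinuousOn (fun t => xf (t + τ)) (Ici 0) := by
    apply hxf.comp (continuous_id.add continuous_const).continuousOn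
    intro t ht
    simp only [mem_Ici, id_eq, Pi.add_apply] at *
    linarith
  have hgxf : ContinuousOn (fun s => g (xf s)) (Ici 0) := hgc.comp_continuousOn hxf
  have part1 : ∀ t : ℝ, 0 ≤ t → xf (t + τ) = semigroupOp α g xf τ f t + (1 / Real.Gamma α) •
      ∫ s in (0:ℝ)..t, ((t - s) ^ (α - 1)) • g (xf (s + τ)) := by
    intro t ht
    have key := hxfeq (t + τ) (by linarith)
    have hK1 : IntervalIntegrable (fun s => (t + τ - s)^(α-1) • g (xf s)) volume 0 τ :=
      smul_int hτ (ker_int hm1 _ _ _) (hgxf.mono Icc_subset_Ici_self)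
    have hK2 : IntervalIntegrable (fun s => (t + τ - s)^(α-1) • g (xf s)) volume τ (t+τ) :=
      smul_int (by linarith) (ker_int hm1 _ _ _) (hgxf.mono (fun x hx => le_trans hτ hx.1))
    have hsplit := integral_add_adjacent_intervals hK1 hK2
    have hshift : (∫ s in τ..(t+τ), (t + τ - s)^(α-1) • g (xf s))
        = ∫ u in (0:ℝ)..t, ((t - u)^(α-1)) • g (xf (u + τ)) := by
      have h0 := intervalIntegral.integral_comp_add_right (a := (0:ℝ)) (b := t)
        (fun s => (t + τ - s)^(α-1) • g (xf s)) τ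
      rw [zero_add] at h0
      rw [← h0]
      apply intervalIntegral.integral_congr
      intro u _
      simp only
      rw [show t + τ - (u + τ) = t - u by ring]
    have hτt : τ + t = t + τ := add_comm τ t
    calc xf (t + τ) = f (t+τ) + (1 / Real.Gamma α) •
          ((∫ s in (0:ℝ)..τ, (t + τ - s)^(α-1) • g (xf s))
            + ∫ s in τ..(t+τ), (t + τ - s)^(α-1) • g (xf s)) := by rw [key, hsplit]
      _ = _ := by
          rw [hshift]
          simp only [semigroupOp, hτt, smul_add]
          rw [add_assoc]
  refine ⟨⟨hψc, part1⟩, ?_⟩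
  intro y hy hyeq
  set z : ℝ → ℝ := fun s => ‖y s - xf (s + τ)‖ with hzdef
  have hzc : ContinuousOn z (Ici 0) := (hy.sub hψc).norm
  have hineq : ∀ t, 0 ≤ t → z t ≤ (L / Real.Gamma α) *
      ∫ s in (0:ℝ)..t, (t - s)^(α-1) * z s := by
    intro t ht
    have hy_int : IntervalIntegrable (fun s => (t-s)^(α-1) • g (y s)) volume 0 t :=
      smul_int ht (ker_int hm1 _ _ _)
        ((hgc.comp_continuousOn hy).mono Icc_subset_Ici_self)
    have hψ_int : IntervalIntegrable (fun s => (t-s)^(α-1) • g (xf (s+τ))) volume 0 t :=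
      smul_int ht (ker_int hm1 _ _ _)
        ((hgc.comp_continuousOn hψc).mono Icc_subset_Ici_self)
    have hdiff : y t - xf (t+τ) = (1/Real.Gamma α) •
        ∫ s in (0:ℝ)..t, (t-s)^(α-1) • (g (y s) - g (xf (s+τ))) := by
      rw [hyeq t ht, part1 t ht, add_sub_add_left_eq_sub, ← smul_sub,
        ← intervalIntegral.integral_sub hy_int hψ_int,
        intervalIntegral.integral_congr
          (g := fun s => (t-s)^(α-1) • (g (y s) - g (xf (s+τ))))
          (fun s _ => (smul_sub _ _ _).symm)]
    have hnorm_int : IntervalIntegrable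
        (fun s => ‖(t-s)^(α-1) • (g (y s) - g (xf (s+τ)))‖) volume 0 t :=
      (hy_int.sub hψ_int).norm.congr
        (fun s _ => by simp only [Pi.sub_apply, smul_sub])
    have hrhs_int : IntervalIntegrable (fun s => (t-s)^(α-1) * (L * z s)) volume 0 t :=
      mul_int ht (ker_int hm1 _ _ _)
        ((continuousOn_const.mul hzc).mono Icc_subset_Ici_self)
    have step1 : z t ≤ (1/Real.Gamma α) *
        ∫ s in (0:ℝ)..t, ‖(t-s)^(α-1) • (g (y s) - g (xf (s+τ)))‖ := by
      rw [hzdef]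
      simp only
      rw [hdiff, norm_smul, Real.norm_eq_abs, abs_of_pos (by positivity)]
      exact mul_le_mul_of_nonneg_left (norm_integral_le_integral_norm ht) (by positivity)
    have step2 : (∫ s in (0:ℝ)..t, ‖(t-s)^(α-1) • (g (y s) - g (xf (s+τ)))‖)
        ≤ ∫ s in (0:ℝ)..t, (t-s)^(α-1) * (L * z s) := by
      refine intervalIntegral.integral_mono_on ht hnorm_int hrhs_int ?_
      intro s hs
      rw [norm_smul, Real.norm_eq_abs, abs_of_nonneg (Real.rpow_nonneg (by linarith [hs.2]) _)]
      exact mul_le_mul_of_nonneg_left (hg _ _) (Real.rpow_nonneg (by linarith [hs.2]) _)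
    have step3 : (∫ s in (0:ℝ)..t, (t-s)^(α-1) * (L * z s))
        = L * ∫ s in (0:ℝ)..t, (t-s)^(α-1) * z s := by
      rw [show (fun s => (t-s)^(α-1) * (L * z s)) = fun s => L * ((t-s)^(α-1) * z s)
        from funext fun s => by ring, intervalIntegral.integral_const_mul]
    calc z t ≤ (1/Real.Gamma α) * ∫ s in (0:ℝ)..t, ‖(t-s)^(α-1) • (g (y s) - g (xf (s+τ)))‖ :=
          step1
      _ ≤ (1/Real.Gamma α) * ∫ s in (0:ℝ)..t, (t-s)^(α-1) * (L * z s) :=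
          mul_le_mul_of_nonneg_left step2 (by positivity)
      _ = (L / Real.Gamma α) * ∫ s in (0:ℝ)..t, (t-s)^(α-1) * z s := by
          rw [step3]; ring
  intro t ht
  have hz0 := gronwall hα0 hα1 (div_pos hL hΓ) hzc (fun s => norm_nonneg _) hineq t ht
  have hsub : y t - xf (t + τ) = 0 := by
    rwa [hzdef, norm_eq_zero] at hz0
  exact sub_eq_zero.mp hsub
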